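/- Dominated alternative under proportional pricing (the $200 collision deductible phenomenon): under single crossing, if for a triplet of alternatives with d₁ > d₂ > d₃ and prices x₁ < x₂ < x₃ the cutoffs satisfy Z₁₂ ≥ Z₁₃ (i.e., the coefficient at which the agent is indifferent between alternatives 1 and 2 is at least the coefficient at which she is indifferent between 1 and 3), then for every coefficient ζ alternative 2 is weakly dominated: either alternative 1 or alternative 3 is weakly preferred to alternative 2, with strict preference except possibly at ζ = Z₁₂ = Z₁₃. Hence under full consideration alternative 2 is chosen with probability 0 whenever the coefficient distribution is atomless. -/

import Mathlib

open MeasureTheory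

/-- Dominated alternative under proportional pricing: given single-crossing cutoffs
Z₁₂, Z₁₃, Z₂₃ for a triplet of alternatives, if Z₁₂ ≥ Z₁₃ then for every coefficient ζ
alternative 2 is weakly dominated by alternative 1 or alternative 3, strictly so
except possibly at ζ = Z₁₂ = Z₁₃; hence under full consideration alternative 2 is
chosen with probability zero for any atomless coefficient distribution. -/
theorem middle_alternative_dominated (U1 U2 U3 : ℝ → ℝ) (Z12 Z13 Z23 : ℝ)
    (h12 : ∀ ζ, (ζ < Z12 → U2 ζ < U1 ζ) ∧ (ζ = Z12 → U2 ζ = U1 ζ) ∧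
      (Z12 < ζ → U1 ζ < U2 ζ))
    (h13 : ∀ ζ, (ζ < Z13 → U3 ζ < U1 ζ) ∧ (ζ = Z13 → U3 ζ = U1 ζ) ∧
      (Z13 < ζ → U1 ζ < U3 ζ))
    (h23 : ∀ ζ, (ζ < Z23 → U3 ζ < U2 ζ) ∧ (ζ = Z23 → U3 ζ = U2 ζ) ∧
      (Z23 < ζ → U2 ζ < U3 ζ))
    (hZ : Z13 ≤ Z12) :
    (∀ ζ, U2 ζ ≤ U1 ζ ∨ U2 ζ ≤ U3 ζ) ∧
    (∀ ζ, ¬(ζ = Z12 ∧ Z12 = Z13) → (U2 ζ < U1 ζ ∨ U2 ζ < U3 ζ)) ∧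
    (∀ (m : Measure ℝ) [NullSingletonClass m],
      m {ζ : ℝ | U1 ζ ≤ U2 ζ ∧ U3 ζ ≤ U2 ζ} = 0) := by
  -- First show Z23 ≤ Z13
  have hU3 : U3 Z13 = U1 Z13 := (h13 Z13).2.1 rfl
  have hU2le : U2 Z13 ≤ U1 Z13 := by
    rcases lt_or_eq_of_le hZ with h | h
    · exact le_of_lt ((h12 Z13).1 h)
    · exact le_of_eq ((h12 Z13).2.1 h)
  have hZ23 : Z23 ≤ Z13 := by
    by_contra h
    push_neg at h
    have := (h23 Z13).1 h
    linarith
  have strict : ∀ ζ, ¬(ζ = Z12 ∧ Z12 = Z13) → (U2 ζ < U1 ζ ∨ U2 ζ < U3 ζ) := by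
    intro ζ hne
    rcases lt_trichotomy ζ Z12 with h | h | h
    · exact Or.inl ((h12 ζ).1 h)
    · -- ζ = Z12, so Z13 ≠ Z12, hence Z13 < Z12 = ζ
      have h13lt : Z13 < ζ := by
        rcases lt_or_eq_of_le hZ with h' | h'
        · linarith
        · exact absurd ⟨h, h'.symm⟩ hne
      exact Or.inr ((h23 ζ).2.2 (lt_of_le_of_lt hZ23 h13lt))
    · have : Z13 < ζ := lt_of_le_of_lt hZ h
      exact Or.inr ((h23 ζ).2.2 (lt_of_le_of_lt hZ23 this))
  refine ⟨?_, strict, ?_⟩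
  · intro ζ
    by_cases hc : ζ = Z12 ∧ Z12 = Z13
    · exact Or.inl (le_of_eq ((h12 ζ).2.1 hc.1))
    · rcases strict ζ hc with h | h
      · exact Or.inl h.le
      · exact Or.inr h.le
  · intro m _
    have hsub : {ζ : ℝ | U1 ζ ≤ U2 ζ ∧ U3 ζ ≤ U2 ζ} ⊆ {Z12} := by
      intro ζ hζ
      by_contra hne
      rcases strict ζ (fun hc => hne (by simp [hc.1])) with h | h
      · exact absurd hζ.1 (not_le.mpr h)
      · exact absurd hζ.2 (not_le.mpr h)
    exact measure_mono_null hsub (measure_singleton Z12)
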